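/- If G is a graph without isolated vertices satisfying γ(G) = β(G), where β(G) is the vertex covering number, then b(G) ≥ δ(G). -/

import Mathlib

open SimpleGraph Finset

variable {V : Type*}

/-- `S` is a dominating set of `G`: every vertex is in `S` or has a neighbor in `S`. -/
def SimpleGraph.IsDomSet (G : SimpleGraph V) (S : Finset V) : Prop :=
  ∀ v : V, v ∈ S ∨ ∃ u ∈ S, G.Adj u v

/-- The domination number of a finite graph. -/
noncomputable def SimpleGraph.domNum [Fintype V] (G : SimpleGraph V) : ℕ :=
  sInf {n | ∃ S : Finset V, S.card = n ∧ G.IsDomSet S}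

/-- The bondage number: the minimum size of a set of edges of `G` whose removal
increases the domination number. -/
noncomputable def SimpleGraph.bondageNum [Fintype V] (G : SimpleGraph V) : ℕ :=
  sInf {n | ∃ B : Finset (Sym2 V), B.card = n ∧ ↑B ⊆ G.edgeSet ∧
    G.domNum < (G.deleteEdges ↑B).domNum}

/-- The vertex covering number of `G`: the minimum size of a set of vertices
meeting every edge. -/
noncomputable def SimpleGraph.coverNum [Fintype V] (G : SimpleGraph V) : ℕ :=
  sInf {n | ∃ S : Finset V, S.card = n ∧ ∀ e ∈ G.edgeSet, ∃ v ∈ S, v ∈ e}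

lemma domNum_le_card [Fintype V] (G : SimpleGraph V) (S : Finset V) (hS : G.IsDomSet S) :
    G.domNum ≤ S.card := Nat.sInf_le ⟨S, rfl, hS⟩

lemma cover_exists [Fintype V] (G : SimpleGraph V) :
    ∃ S : Finset V, S.card = G.coverNum ∧ ∀ e ∈ G.edgeSet, ∃ v ∈ S, v ∈ e := by
  have hne : {n | ∃ S : Finset V, S.card = n ∧ ∀ e ∈ G.edgeSet, ∃ v ∈ S, v ∈ e}.Nonempty := by
    refine ⟨(univ : Finset V).card, univ, rfl, fun e he => ?_⟩
    exact ⟨e.out.1, mem_univ _, Sym2.out_fst_mem e⟩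
  obtain ⟨S, hc, hcov⟩ := Nat.sInf_mem hne
  exact ⟨S, hc, hcov⟩

theorem minDegree_le_bondage_of_domNum_eq_coverNum [Fintype V]
    (G : SimpleGraph V) [DecidableRel G.Adj]
    (hiso : ∀ v : V, 0 < G.degree v) (h : G.domNum = G.coverNum) :
    G.minDegree ≤ G.bondageNum := by
  classical
  cases isEmpty_or_nonempty V with
  | inl hV =>
    have : (univ : Finset V).image (fun v => G.degree v) = ∅ := by simp
    simp [SimpleGraph.minDegree, this]
  | inr hV =>
    have hne : {n | ∃ B : Finset (Sym2 V), B.card = n ∧ ↑B ⊆ G.edgeSet ∧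
        G.domNum < (G.deleteEdges ↑B).domNum}.Nonempty := by
      refine ⟨G.edgeFinset.card, G.edgeFinset, rfl, by simp, ?_⟩
      -- γ(G) ≤ |V| - 1 < |V| ≤ γ(G')
      have v := hV.some
      have hvd := hiso v
      rw [← SimpleGraph.card_neighborFinset_eq_degree, Finset.card_pos] at hvd
      obtain ⟨u, hu⟩ := hvd
      rw [SimpleGraph.mem_neighborFinset] at hu
      have hdom : G.IsDomSet (univ.erase v) := by
        intro w
        by_cases hw : w = v
        · subst hw
          exact Or.inr ⟨u, Finset.mem_erase.2 ⟨hu.ne', Finset.mem_univ _⟩, hu.symm⟩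
        · exact Or.inl (Finset.mem_erase.2 ⟨hw, Finset.mem_univ _⟩)
      have h1 : G.domNum ≤ Fintype.card V - 1 := by
        have := domNum_le_card G _ hdom
        rwa [Finset.card_erase_of_mem (Finset.mem_univ v), Finset.card_univ] at this
      have h2 : Fintype.card V ≤ (G.deleteEdges ↑G.edgeFinset).domNum := by
        have hbot : ∀ S : Finset V, (G.deleteEdges ↑G.edgeFinset).IsDomSet S →
            Fintype.card V ≤ S.card := by
          intro S hS
          have : S = univ := by
            apply Finset.eq_univ_of_forall
            intro w
            rcases hS w with hw | ⟨u', hu', hadj⟩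
            · exact hw
            · rw [SimpleGraph.deleteEdges_adj] at hadj
              exact absurd (by rw [SimpleGraph.mem_edgeFinset]; exact G.mem_edgeSet.2 hadj.1 :
                  s(u', w) ∈ G.edgeFinset) (by simpa using hadj.2)
          rw [this, Finset.card_univ]
        apply le_csInf
        · exact ⟨(univ : Finset V).card, univ, rfl, fun w => Or.inl (mem_univ _)⟩
        · rintro n ⟨S, rfl, hS⟩
          exact hbot S hS
      have hcard : 0 < Fintype.card V := Fintype.card_pos
      omega
    apply le_csInf hne
    rintro n ⟨B, rfl, hBsub, hBlt⟩
    by_contra hlt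
    push_neg at hlt
    set G' := G.deleteEdges ↑B with hG'
    -- Build: a minimum cover of G' is a dominating set of G'
    have hle : G' ≤ G := G.deleteEdges_le _
    have hnoiso : ∀ v : V, ∃ u, G'.Adj v u := by
      intro v
      have hdeg : G.minDegree ≤ (G.neighborFinset v).card := by
        rw [SimpleGraph.card_neighborFinset_eq_degree]
        exact G.minDegree_le_degree v
      have hinj : Set.InjOn (fun u => s(v, u)) ((G.neighborFinset v).filter
          (fun u => s(v, u) ∈ B)) := by
        intro a _ b _ hab
        exact Sym2.congr_right.1 hab
      have hmaps : ∀ a ∈ (G.neighborFinset v).filter (fun u => s(v, u) ∈ B),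
          s(v, a) ∈ B := fun a ha => (Finset.mem_filter.1 ha).2
      have hcard := Finset.card_le_card_of_injOn _ hmaps hinj
      have hfsub : (G.neighborFinset v).filter (fun u => s(v, u) ∈ B) ⊆
          G.neighborFinset v := Finset.filter_subset _ _
      have hcard2 : ((G.neighborFinset v).filter (fun u => s(v, u) ∈ B)).card <
          (G.neighborFinset v).card := by omega
      have hns : ¬ (G.neighborFinset v ⊆
          (G.neighborFinset v).filter (fun u => s(v, u) ∈ B)) :=
        fun hsub => absurd (Finset.card_le_card hsub) (by omega)
      obtain ⟨u, huN, huF⟩ := Finset.not_subset.1 hns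
      refine ⟨u, ?_⟩
      rw [hG', SimpleGraph.deleteEdges_adj]
      refine ⟨(SimpleGraph.mem_neighborFinset G v u).1 huN, ?_⟩
      intro hmem
      exact huF (Finset.mem_filter.2 ⟨huN, hmem⟩)
    obtain ⟨S, hSc, hScov⟩ := cover_exists G'
    have hSdom : G'.IsDomSet S := by
      intro v
      by_cases hv : v ∈ S
      · exact Or.inl hv
      · obtain ⟨u, hadj⟩ := hnoiso v
        obtain ⟨w, hwS, hwe⟩ := hScov _ (G'.mem_edgeSet.2 hadj)
        rcases Sym2.mem_iff.1 hwe with rfl | rfl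
        · exact absurd hwS hv
        · exact Or.inr ⟨w, hwS, hadj.symm⟩
    have h3 : G'.domNum ≤ G'.coverNum := hSc ▸ domNum_le_card G' S hSdom
    have h4 : G'.coverNum ≤ G.coverNum := by
      obtain ⟨T, hTc, hTcov⟩ := cover_exists G
      calc G'.coverNum ≤ T.card := Nat.sInf_le ⟨T, rfl, fun e he =>
            hTcov e (SimpleGraph.edgeSet_mono hle he)⟩
        _ = G.coverNum := hTc
    omega
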